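/- Under the hypotheses of the worst-case relaxation bound (one-layer ReLU network, bounds l ≤ 0 ≤ u valid on X with l < u componentwise, and existence of a common input x* ∈ X optimal for both the LP relaxation and the unrelaxed problem over X), let X̃ ⊆ X be an input uncertainty subset whose valid preactivation bounds are the inward-scaled ũ = αu and l̃ = αl for some α ∈ (0,1), with these scaled bounds and the common-optimizer assumption holding for X̃. Then f̂*(X̃; αl, αu) − f*(X) ≤ −α · Σ_{i=1}^{n_z} max(c_i, 0) · u_i l_i/(u_i − l_i); i.e., the worst-case relaxation bound scales linearly by α. -/
import Mathlib


open Finset Matrix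

noncomputable section

/-- Membership of `(x, z)` in the relaxed ReLU network constraint set `N(W, l, u)`. -/
def InRelax {nx nz : ℕ} (W : Matrix (Fin nz) (Fin nx) ℝ) (l u : Fin nz → ℝ)
    (x : Fin nx → ℝ) (z : Fin nz → ℝ) : Prop :=
  ∀ i, 0 ≤ z i ∧ W.mulVec x i ≤ z i ∧
    z i ≤ u i * (W.mulVec x i - l i) / (u i - l i)

/-- Values `cᵀ ReLU(Wx)` of the true network over `X`. -/
def trueVals {nx nz : ℕ} (W : Matrix (Fin nz) (Fin nx) ℝ) (c : Fin nz → ℝ)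
    (X : Set (Fin nx → ℝ)) : Set ℝ :=
  {v | ∃ x ∈ X, v = ∑ i, c i * max (W.mulVec x i) 0}

/-- Values `cᵀ z` over the LP relaxation feasible set. -/
def hatVals {nx nz : ℕ} (W : Matrix (Fin nz) (Fin nx) ℝ) (c : Fin nz → ℝ)
    (X : Set (Fin nx → ℝ)) (l u : Fin nz → ℝ) : Set ℝ :=
  {v | ∃ x z, x ∈ X ∧ InRelax W l u x z ∧ v = ∑ i, c i * z i}

/-- The common-optimizer assumption for a set `S` with bounds `(l, u)`: there exists
`x* ∈ S` such that some `(x*, z̃*)` attains `f̂*(S; l, u) = fhat` and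
`(x*, ReLU(Wx*))` attains `f*(S) = fstar`. -/
def CommonOptimizer {nx nz : ℕ} (W : Matrix (Fin nz) (Fin nx) ℝ) (c : Fin nz → ℝ)
    (S : Set (Fin nx → ℝ)) (l u : Fin nz → ℝ) (fstar fhat : ℝ) : Prop :=
  ∃ xstar ∈ S, (∃ ztilde : Fin nz → ℝ, InRelax W l u xstar ztilde ∧
      ∑ i, c i * ztilde i = fhat) ∧
    ∑ i, c i * max (W.mulVec xstar i) 0 = fstar

/-- linear scaling of relaxation error: under the hypotheses of the
worst-case relaxation bound on `X`, if `X̃ ⊆ X` has valid inward-scaled bounds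
`l̃ = αl`, `ũ = αu` with `α ∈ (0,1)` and the common-optimizer assumption holds for
`X̃`, then `f̂*(X̃; αl, αu) − f*(X) ≤ −α Σᵢ max(cᵢ, 0) · uᵢ lᵢ/(uᵢ − lᵢ)`. -/
theorem linear_scaling_of_relaxation_error {nx nz : ℕ}
    (W : Matrix (Fin nz) (Fin nx) ℝ) (c : Fin nz → ℝ)
    (X : Set (Fin nx → ℝ)) (l u : Fin nz → ℝ)
    -- hypotheses of the worst-case relaxation bound on `X`
    (hsign : ∀ i, l i ≤ 0 ∧ 0 ≤ u i ∧ l i < u i)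
    (hvalid : ∀ x ∈ X, ∀ i, l i ≤ W.mulVec x i ∧ W.mulVec x i ≤ u i)
    (fstar fhat : ℝ)
    (hfstar : IsGreatest (trueVals W c X) fstar)
    (hfhat : IsGreatest (hatVals W c X l u) fhat)
    (hcommon : CommonOptimizer W c X l u fstar fhat)
    -- the scaled subset `X̃ ⊆ X` with bounds `αl`, `αu`
    (Xt : Set (Fin nx → ℝ)) (hXt : Xt ⊆ X)
    (α : ℝ) (hα : 0 < α ∧ α < 1)
    (hvalidt : ∀ x ∈ Xt, ∀ i, α * l i ≤ W.mulVec x i ∧ W.mulVec x i ≤ α * u i)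
    (fstarT fhatT : ℝ)
    (hfstarT : IsGreatest (trueVals W c Xt) fstarT)
    (hfhatT : IsGreatest
      (hatVals W c Xt (fun i => α * l i) (fun i => α * u i)) fhatT)
    (hcommonT : CommonOptimizer W c Xt (fun i => α * l i) (fun i => α * u i)
      fstarT fhatT) :
    fhatT - fstar ≤ -α * ∑ i, max (c i) 0 * (u i * l i) / (u i - l i) := by
  obtain ⟨hα0, hα1⟩ := hα
  obtain ⟨xs, hxs, ⟨zt, hzt, hsum⟩, hrelu⟩ := hcommonT
  have hfsT : fstarT ≤ fstar := hfstar.2 ⟨xs, hXt hxs, hrelu.symm⟩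
  have key : fhatT - fstarT ≤
      ∑ i, -α * (max (c i) 0 * (u i * l i) / (u i - l i)) := by
    rw [← hsum, ← hrelu, ← Finset.sum_sub_distrib]
    apply Finset.sum_le_sum
    intro i _
    obtain ⟨hl0, hu0, hlu⟩ := hsign i
    obtain ⟨hz0, hzW, hzU⟩ := hzt i
    set t := W.mulVec xs i with ht
    have hD : (0:ℝ) < u i - l i := by linarith
    have hmax : max t 0 ≤ zt i := max_le hzW hz0
    rcases le_or_gt (c i) 0 with hc | hc
    · have hmc : max (c i) 0 = 0 := max_eq_right hc
      rw [hmc]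
      have : c i * zt i ≤ c i * max t 0 := mul_le_mul_of_nonpos_left hmax hc
      simp only [zero_mul, zero_div, mul_zero]
      linarith
    · have hmc : max (c i) 0 = c i := max_eq_left hc.le
      rw [hmc]
      -- From the upper constraint: zt i * (u i - l i) ≤ u i * t - α * u i * l i
      have hub : zt i * (α * (u i - l i)) ≤ α * u i * (t - α * l i) := by
        have h1 : α * u i - α * l i = α * (u i - l i) := by ring
        have h2 : (0:ℝ) < α * (u i - l i) := by positivity
        have := hzU
        rw [h1] at this
        exact (le_div_iff₀ h2).mp this
      have hub2 : zt i * (u i - l i) ≤ u i * t - α * (u i * l i) := by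
        nlinarith [hub]
      -- u i * t ≤ max t 0 * (u i - l i)
      have hkey : u i * t ≤ max t 0 * (u i - l i) := by
        rcases le_or_gt t 0 with h | h
        · have : max t 0 = 0 := max_eq_right h
          rw [this]
          nlinarith
        · have : max t 0 = t := max_eq_left h.le
          rw [this]
          nlinarith
      rw [show -α * (c i * (u i * l i) / (u i - l i)) =
        (-α * (c i * (u i * l i))) / (u i - l i) by ring, le_div_iff₀ hD]
      nlinarith [mul_le_mul_of_nonneg_left hub2 hc.le,
        mul_le_mul_of_nonneg_left hkey hc.le]
  calc fhatT - fstar ≤ fhatT - fstarT := by linarith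
    _ ≤ ∑ i, -α * (max (c i) 0 * (u i * l i) / (u i - l i)) := key
    _ = -α * ∑ i, max (c i) 0 * (u i * l i) / (u i - l i) := by
        rw [Finset.mul_sum]
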